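/- Equip H := H_a ∪ H_b ∪ H_c ⊂ M(A) with any total order ≤ such that: within H_b and within H_c the order is the one defined in the construction; within each H_a^n an arbitrary total order is chosen; for each type d ∈ {a,b,c}, elements of H_d^p precede elements of H_d^q whenever p > q; and every element of H_a precedes every element of H_b, which precedes every element of H_c. Then the Hall-set conditions hold for all composite elements of H: for every h = (h′,h″) ∈ H with h not a letter, one has h″ ∈ H and h < h″; h′ ∈ H and h′ < h″; and either h′ is a letter (h′ ∈ {a,b}) or h′ = (x,y) with y ∈ H and y ≥ h″. -/

import Mathlib

/-! STATEMENT 13: any total order on `H = H_a ∪ H_b ∪ H_c` compatible with the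
construction satisfies the Hall-set conditions on composite elements. -/

/-- The three-letter alphabet `A = {a, b, c}`. -/
inductive Letter : Type
  | a | b | c
deriving DecidableEq

/-- Words on the alphabet. -/
abbrev Word := List Letter

/-- The free magma `M(A)` on the alphabet: binary complete planar rooted trees
with leaves labelled by letters (fully parenthesized expressions). -/
inductive FM : Type
  | leaf : Letter → FM
  | node : FM → FM → FM
deriving DecidableEq

/-- The foliage map `f : M(A) → A*` (drop all brackets). -/
def fol : FM → Word
  | FM.leaf d => [d]
  | FM.node t t' => fol t ++ fol t'

/-! ### The ordered families of trees `H_b^n`, `H_c^n`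

Each level is built as a *sorted list* (increasing with respect to the total
order of the construction); across levels, trees of higher level (with more
leaves) are *smaller*.  The `H_c`-levels are produced by a single
table-building recursion. -/

/-- Table of the levels `H_c^1, …, H_c^n` (entry `i` is the sorted list of the
trees of `H_c^i`; entry `0` is empty).

* `H_c^1 = {c}`.
* For `m = 2k` even, `H_c^m = ⋃_{i=1}^{k} {(v,w) : v ∈ H_b^i, w ∈ H_c^{m−i}}`,
  ordered lexicographically (`(v,w) < (v′,w′)` iff `v < v′`, or `v = v′` and
  `w < w′`; `v`'s with more leaves are smaller, so the blocks appear for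
  `i = k, k−1, …, 1`), where `H_b^1 = {b}` and `H_b^i = {(a,v′) : v′ ∈ H_c^{i−1}}`.
* For `m = 2k+1` odd, additionally the block
  `E_k = {((a,v),w) : v, w ∈ H_c^k, v ≥ w}` is prepended (its elements are
  smaller than all other elements of `H_c^m`), ordered lexicographically in
  `(v,w)`. -/
def HClevels : ℕ → List (List FM)
  | 0 => [[]]
  | n + 1 =>
    let t := HClevels n
    let C : ℕ → List FM := fun i => t.getD i []
    let m := n + 1
    let k := m / 2
    let prods : List FM :=
      (List.range k).flatMap (fun j =>
        let i := k - j
        if i = 1 then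
          (C (m - 1)).map (fun w => FM.node (FM.leaf Letter.b) w)
        else
          (C (i - 1)).flatMap (fun v =>
            (C (m - i)).map (fun w =>
              FM.node (FM.node (FM.leaf Letter.a) v) w)))
    let Ck := C k
    let Ek : List FM :=
      (List.range Ck.length).flatMap (fun r =>
        (List.range (r + 1)).map (fun s =>
          FM.node (FM.node (FM.leaf Letter.a) (Ck.getD r (FM.leaf Letter.a)))
            (Ck.getD s (FM.leaf Letter.a))))
    let Cm : List FM :=
      if m = 1 then [FM.leaf Letter.c]
      else if m % 2 = 0 then prods
      else Ek ++ prods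
    t ++ [Cm]

/-- The level `H_c^n`, as a sorted (increasing) list of trees. -/
def HCn (n : ℕ) : List FM := (HClevels n).getD n []

/-- The level `H_b^n`, as a sorted (increasing) list of trees:
`H_b^1 = {b}` and `H_b^n = {(a,v) : v ∈ H_c^{n−1}}` with the inherited order. -/
def HBn : ℕ → List FM
  | 0 => []
  | 1 => [FM.leaf Letter.b]
  | n + 2 => (HCn (n + 1)).map (fun v => FM.node (FM.leaf Letter.a) v)

/-- The level (number of leaves) of a tree. -/
def lev (h : FM) : ℕ := (fol h).length

/-- Position of a tree inside its level `H_c^{lev h}`. -/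
def cIdx (h : FM) : ℕ := (HCn (lev h)).findIdx (fun x => decide (x = h))

/-- Position of a tree inside its level `H_b^{lev h}`. -/
def bIdx (h : FM) : ℕ := (HBn (lev h)).findIdx (fun x => decide (x = h))

/-- The strict total order on `H_c = ⋃_n H_c^n`: trees of higher level are
smaller, trees of the same level are compared by position in the sorted level. -/
def cLt (v w : FM) : Prop := lev w < lev v ∨ (lev v = lev w ∧ cIdx v < cIdx w)

/-- `v ≤ w` in `H_c`. -/
def cLe (v w : FM) : Prop := cLt v w ∨ v = w

/-- The strict total order on `H_b = ⋃_n H_b^n`: trees of higher level are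
smaller, trees of the same level are compared by position in the sorted level. -/
def bLt (v w : FM) : Prop := lev w < lev v ∨ (lev v = lev w ∧ bIdx v < bIdx w)

/-- `v ≤ w` in `H_b`. -/
def bLe (v w : FM) : Prop := bLt v w ∨ v = w

/-- Membership in `H_b = ⋃_n H_b^n`. -/
def memHB (h : FM) : Prop := ∃ n : ℕ, h ∈ HBn n

/-- Membership in `H_c = ⋃_n H_c^n`. -/
def memHC (h : FM) : Prop := ∃ n : ℕ, h ∈ HCn n

/-- Membership in `H_a = ⋃_n H_a^n`: the trees `(⋯((a,v₁),v₂)⋯,v_i)` with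
`i ≥ 0`, all `v_j ∈ H_b` and `v₁ ≥ ⋯ ≥ v_i` (encoded as a left fold of `node`
over the nonincreasing list `[v₁, …, v_i]`). -/
def memHA (h : FM) : Prop :=
  ∃ l : List FM, (∀ v ∈ l, memHB v) ∧ List.Chain' (fun v w => bLe w v) l ∧
    h = l.foldl FM.node (FM.leaf Letter.a)

/-- Membership in `H = H_a ∪ H_b ∪ H_c`. -/
def memH (h : FM) : Prop := memHA h ∨ memHB h ∨ memHC h

open Letter FM List

lemma lev_node (s t : FM) : lev (FM.node s t) = lev s + lev t := by
  simp [lev, fol]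

lemma lev_leaf (d : Letter) : lev (FM.leaf d) = 1 := rfl

lemma lev_pos (h : FM) : 0 < lev h := by
  induction h with
  | leaf d => simp [lev, fol]
  | node s t ihs iht => rw [lev_node]; omega

lemma HClevels_length (n : ℕ) : (HClevels n).length = n + 1 := by
  induction n with
  | zero => rfl
  | succ n ih => simp [HClevels, ih]

lemma HClevels_succ (n : ℕ) : ∃ x, HClevels (n + 1) = HClevels n ++ [x] := ⟨_, rfl⟩

lemma HClevels_getD {m n : ℕ} (h : m ≤ n) : (HClevels n).getD m [] = HCn m := by
  induction n with
  | zero => interval_cases m; rfl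
  | succ n ih =>
    rcases Nat.lt_or_ge m (n + 1) with hm | hm
    · obtain ⟨x, hx⟩ := HClevels_succ n
      rw [hx, List.getD_append _ _ _ _ (by rw [HClevels_length]; omega)]
      exact ih (by omega)
    · have : m = n + 1 := by omega
      subst this; rfl

/-- The product blocks of level `m`, with lookup function `C`. -/
def prodsF (C : ℕ → List FM) (m : ℕ) : List FM :=
  (List.range (m / 2)).flatMap (fun j =>
    let i := m / 2 - j
    if i = 1 then
      (C (m - 1)).map (fun w => FM.node (FM.leaf Letter.b) w)
    else
      (C (i - 1)).flatMap (fun v =>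
        (C (m - i)).map (fun w =>
          FM.node (FM.node (FM.leaf Letter.a) v) w)))

/-- The block `E_k` built from the sorted list `Ck` of `H_c^k`. -/
def ekL (Ck : List FM) : List FM :=
  (List.range Ck.length).flatMap (fun r =>
    (List.range (r + 1)).map (fun s =>
      FM.node (FM.node (FM.leaf Letter.a) (Ck.getD r (FM.leaf Letter.a)))
        (Ck.getD s (FM.leaf Letter.a))))

lemma HClevels_succ' (n : ℕ) :
    HClevels (n + 1) = HClevels n ++
      [if n + 1 = 1 then [FM.leaf Letter.c]
       else if (n + 1) % 2 = 0 then
         prodsF (fun i => (HClevels n).getD i []) (n + 1)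
       else
         ekL ((HClevels n).getD ((n + 1) / 2) []) ++
           prodsF (fun i => (HClevels n).getD i []) (n + 1)] := rfl

lemma prodsF_congr {C C' : ℕ → List FM} {m : ℕ} (h : ∀ i < m, C i = C' i) (hm : 1 ≤ m) :
    prodsF C m = prodsF C' m := by
  unfold prodsF
  refine List.flatMap_congr fun j hj => ?_
  rw [List.mem_range] at hj
  have h1 : m - 1 < m := by omega
  have h2 : m / 2 - j - 1 < m := by omega
  have h3 : m - (m / 2 - j) < m := by omega
  dsimp only
  by_cases hi : m / 2 - j = 1
  · rw [if_pos hi, if_pos hi, h _ h1]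
  · rw [if_neg hi, if_neg hi, h _ h2, h _ h3]

lemma HCn_eq {m : ℕ} (hm : 2 ≤ m) :
    HCn m = if m % 2 = 0 then prodsF HCn m
      else ekL (HCn (m / 2)) ++ prodsF HCn m := by
  obtain ⟨n, rfl⟩ : ∃ n, m = n + 1 := ⟨m - 1, by omega⟩
  have hlen := HClevels_length n
  have h0 : HCn (n + 1) = (HClevels (n + 1)).getD (n + 1) [] := rfl
  rw [h0, HClevels_succ', List.getD_append_right _ _ _ _ (by omega), hlen]
  simp only [Nat.sub_self]
  have hCgetD : ∀ i < n + 1, (HClevels n).getD i [] = HCn i :=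
    fun i hi => HClevels_getD (by omega)
  rw [if_neg (by omega : ¬ n + 1 = 1),
    prodsF_congr hCgetD (by omega), hCgetD _ (by omega : (n+1)/2 < n+1)]
  rfl

lemma HCn_zero : HCn 0 = [] := rfl

lemma HCn_one : HCn 1 = [FM.leaf Letter.c] := rfl

lemma getD_mem {l : List FM} {r : ℕ} (h : r < l.length) (d : FM) : l.getD r d ∈ l := by
  rw [List.getD_eq_getElem _ _ h]; exact List.getElem_mem _

lemma getD_inj {l : List FM} (hl : l.Nodup) {r s : ℕ} (hr : r < l.length)
    (hs : s < l.length) (h : l.getD r (FM.leaf Letter.a) = l.getD s (FM.leaf Letter.a)) :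
    r = s := by
  rw [List.getD_eq_getElem _ _ hr, List.getD_eq_getElem _ _ hs] at h
  exact hl.getElem_inj_iff.1 h

/-- The block of index `i` inside `H_c^m`. -/
def blockF (m i : ℕ) : List FM :=
  if i = 1 then (HCn (m - 1)).map (fun w => FM.node (FM.leaf Letter.b) w)
  else (HCn (i - 1)).flatMap (fun v =>
    (HCn (m - i)).map (fun w => FM.node (FM.node (FM.leaf Letter.a) v) w))

lemma prodsF_eq (m : ℕ) :
    prodsF HCn m = (List.range (m / 2)).flatMap (fun j => blockF m (m / 2 - j)) := rfl

lemma mem_blockF {m i : ℕ} {h : FM} (hh : h ∈ blockF m i) :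
    (i = 1 ∧ ∃ w ∈ HCn (m - 1), h = FM.node (FM.leaf Letter.b) w) ∨
    (i ≠ 1 ∧ ∃ v ∈ HCn (i - 1), ∃ w ∈ HCn (m - i),
      h = FM.node (FM.node (FM.leaf Letter.a) v) w) := by
  unfold blockF at hh
  by_cases hi : i = 1
  · rw [if_pos hi] at hh
    obtain ⟨w, hw, rfl⟩ := List.mem_map.1 hh
    exact Or.inl ⟨hi, w, hw, rfl⟩
  · rw [if_neg hi] at hh
    obtain ⟨v, hv, hh⟩ := List.mem_flatMap.1 hh
    obtain ⟨w, hw, rfl⟩ := List.mem_map.1 hh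
    exact Or.inr ⟨hi, v, hv, w, hw, rfl⟩

lemma mem_prodsF {m : ℕ} {h : FM} (hh : h ∈ prodsF HCn m) :
    (∃ w ∈ HCn (m - 1), h = FM.node (FM.leaf Letter.b) w) ∨
    (∃ i, 2 ≤ i ∧ 2 * i ≤ m ∧ ∃ v ∈ HCn (i - 1), ∃ w ∈ HCn (m - i),
      h = FM.node (FM.node (FM.leaf Letter.a) v) w) := by
  rw [prodsF_eq] at hh
  obtain ⟨j, hj, hh⟩ := List.mem_flatMap.1 hh
  rw [List.mem_range] at hj
  rcases mem_blockF hh with ⟨h1, w, hw, rfl⟩ | ⟨h1, v, hv, w, hw, rfl⟩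
  · exact Or.inl ⟨w, hw, rfl⟩
  · refine Or.inr ⟨m / 2 - j, by omega, by omega, v, hv, w, hw, rfl⟩

lemma mem_ekL {k : ℕ} {h : FM} (hh : h ∈ ekL (HCn k)) :
    ∃ r s : ℕ, s ≤ r ∧ r < (HCn k).length ∧
      h = FM.node (FM.node (FM.leaf Letter.a) ((HCn k).getD r (FM.leaf Letter.a)))
        ((HCn k).getD s (FM.leaf Letter.a)) := by
  unfold ekL at hh
  obtain ⟨r, hr, hh⟩ := List.mem_flatMap.1 hh
  obtain ⟨s, hs, rfl⟩ := List.mem_map.1 hh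
  rw [List.mem_range] at hr hs
  exact ⟨r, s, by omega, hr, rfl⟩

lemma lev_HC : ∀ n, ∀ h ∈ HCn n, lev h = n := by
  intro n
  induction n using Nat.strong_induction_on with
  | _ n ih =>
    intro h hh
    match n, hh, ih with
    | 0, hh, _ => simp [HCn_zero] at hh
    | 1, hh, _ => rw [HCn_one, List.mem_singleton] at hh; subst hh; rfl
    | (n+2), hh, ih =>
      rw [HCn_eq (by omega)] at hh
      set m := n + 2 with hmdef
      have hprods : h ∈ prodsF HCn m → lev h = m := by
        intro hp
        rcases mem_prodsF hp with ⟨w, hw, rfl⟩ | ⟨i, hi2, him, v, hv, w, hw, rfl⟩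
        · rw [lev_node, lev_leaf, ih (m-1) (by omega) w hw]; omega
        · have h1 := ih (i-1) (by omega) v hv
          have h2 := ih (m-i) (by omega) w hw
          rw [lev_node, lev_node, lev_leaf, h1, h2]; omega
      split at hh
      · exact hprods hh
      · rcases List.mem_append.1 hh with hek | hp
        · obtain ⟨r, s, hsr, hr, rfl⟩ := mem_ekL hek
          have hk : m / 2 < m := by omega
          have h1 := ih (m/2) hk _ (getD_mem hr (FM.leaf Letter.a))
          have h2 := ih (m/2) hk _ (getD_mem (by omega : s < (HCn (m/2)).length) (FM.leaf Letter.a))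
          rw [lev_node, lev_node, lev_leaf, h1, h2]
          omega
        · exact hprods hp

lemma lev_HB : ∀ n, ∀ h ∈ HBn n, lev h = n := by
  intro n h hh
  match n, hh with
  | 0, hh => simp [HBn] at hh
  | 1, hh => rw [HBn, List.mem_singleton] at hh; subst hh; rfl
  | (n+2), hh =>
    obtain ⟨v, hv, rfl⟩ := List.mem_map.1 hh
    rw [lev_node, lev_leaf, lev_HC _ v hv]
    omega

/-- The number of leaves of the left child. -/
def lsz : FM → ℕ
  | FM.leaf _ => 0
  | FM.node s _ => lev s

lemma lsz_blockF {m i : ℕ} {h : FM} (hi : 1 ≤ i) (hh : h ∈ blockF m i) : lsz h = i := by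
  rcases mem_blockF hh with ⟨h1, w, hw, rfl⟩ | ⟨h1, v, hv, w, hw, rfl⟩
  · rw [h1]; rfl
  · show lev _ = i
    rw [lev_node, lev_leaf, lev_HC _ v hv]; omega

lemma lsz_ekL {k : ℕ} {h : FM} (hh : h ∈ ekL (HCn k)) : lsz h = k + 1 := by
  obtain ⟨r, s, hsr, hr, rfl⟩ := mem_ekL hh
  show lev _ = k + 1
  rw [lev_node, lev_leaf, lev_HC _ _ (getD_mem hr (FM.leaf Letter.a))]
  omega

lemma nodup_blockF {m i : ℕ} (hi : 1 ≤ i) (him : i < m) (IH : ∀ j, j < m → (HCn j).Nodup) :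
    (blockF m i).Nodup := by
  unfold blockF
  split
  · exact (IH (m-1) (by omega)).map (fun w w' hww => by injection hww)
  · refine List.nodup_flatMap.2 ⟨fun v _ => ?_, ?_⟩
    · exact (IH (m-i) (by omega)).map (fun w w' hww => by injection hww)
    · refine (IH (i-1) (by omega)).imp ?_
      intro v v' hvv
      intro x hx hx'
      obtain ⟨w, _, rfl⟩ := List.mem_map.1 hx
      obtain ⟨w', _, he⟩ := List.mem_map.1 hx'
      injection he with he1 he2
      injection he1 with _ he3
      exact hvv he3.symm

lemma nodup_prodsF {m : ℕ} (IH : ∀ j, j < m → (HCn j).Nodup) :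
    (prodsF HCn m).Nodup := by
  rw [prodsF_eq]
  refine List.nodup_flatMap.2 ⟨?_, ?_⟩
  · intro j hj
    rw [List.mem_range] at hj
    exact nodup_blockF (by omega) (by omega) IH
  · refine List.pairwise_iff_getElem.2 ?_
    intro j j' hj hj' hjj
    simp only [List.length_range] at hj hj'
    simp only [List.getElem_range]
    intro x hx hx'
    have h1 := lsz_blockF (by omega : 1 ≤ m / 2 - j) hx
    have h2 := lsz_blockF (by omega : 1 ≤ m / 2 - j') hx'
    omega

lemma nodup_ekL {k : ℕ} (hk : (HCn k).Nodup) : (ekL (HCn k)).Nodup := by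
  unfold ekL
  refine List.nodup_flatMap.2 ⟨?_, ?_⟩
  · intro r hr
    rw [List.mem_range] at hr
    refine List.Nodup.map_on ?_ List.nodup_range
    intro s hs s' hs' he
    rw [List.mem_range] at hs hs'
    injection he with _ he2
    exact getD_inj hk (by omega) (by omega) he2
  · refine List.pairwise_iff_getElem.2 ?_
    intro r r' hr hr' hrr
    simp only [List.length_range] at hr hr'
    simp only [List.getElem_range]
    intro x hx hx'
    obtain ⟨s, hs, rfl⟩ := List.mem_map.1 hx
    obtain ⟨s', hs', he⟩ := List.mem_map.1 hx'
    injection he with he1 he2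
    injection he1 with _ he3
    exact absurd (getD_inj hk hr hr' he3.symm) (by omega)

lemma nodup_HC : ∀ n, (HCn n).Nodup := by
  intro n
  induction n using Nat.strong_induction_on with
  | _ n ih =>
    match n, ih with
    | 0, _ => simp [HCn_zero]
    | 1, _ => simp [HCn_one]
    | (n+2), ih =>
      rw [HCn_eq (by omega)]
      set m := n + 2 with hmdef
      have IH : ∀ j, j < m → (HCn j).Nodup := fun j hj => ih j hj
      split
      · exact nodup_prodsF IH
      · refine (nodup_ekL (IH (m/2) (by omega))).append (nodup_prodsF IH) ?_
        intro x hx hx'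
        have h1 := lsz_ekL hx
        rw [prodsF_eq] at hx'
        obtain ⟨j, hj, hx'⟩ := List.mem_flatMap.1 hx'
        rw [List.mem_range] at hj
        have h2 := lsz_blockF (by omega : 1 ≤ m / 2 - j) hx'
        omega

lemma findIdx_getElem {l : List FM} (hl : l.Nodup) {r : ℕ} (hr : r < l.length) :
    l.findIdx (fun x => decide (x = l[r])) = r := by
  induction l generalizing r with
  | nil => simp at hr
  | cons a t ih =>
    cases r with
    | zero => simp [List.findIdx_cons]
    | succ r =>
      have hrt : r < t.length := by simpa using hr
      have ha : a ≠ t[r] := by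
        intro h
        exact (List.nodup_cons.1 hl).1 (h ▸ List.getElem_mem hrt)
      rw [List.findIdx_cons]
      simp only [List.getElem_cons_succ]
      rw [decide_eq_false ha]
      simp [ih (List.nodup_cons.1 hl).2 hrt]

lemma cIdx_getD {k r : ℕ} (hr : r < (HCn k).length) :
    cIdx ((HCn k).getD r (FM.leaf Letter.a)) = r := by
  have hm := getD_mem hr (FM.leaf Letter.a)
  have hlev : lev ((HCn k).getD r (FM.leaf Letter.a)) = k := lev_HC k _ hm
  unfold cIdx
  rw [hlev, List.getD_eq_getElem _ _ hr]
  exact findIdx_getElem (nodup_HC k) hr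

lemma memHA_leaf_a : memHA (FM.leaf Letter.a) := ⟨[], by simp, List.isChain_nil, rfl⟩

lemma memHB_leaf_b : memHB (FM.leaf Letter.b) := ⟨1, by simp [HBn]⟩

lemma memHB_node_a {v : FM} {k : ℕ} (hk : 1 ≤ k) (hv : v ∈ HCn k) :
    FM.node (FM.leaf Letter.a) v ∈ HBn (k + 1) := by
  obtain ⟨j, rfl⟩ : ∃ j, k = j + 1 := ⟨k - 1, by omega⟩
  exact List.mem_map.2 ⟨v, hv, rfl⟩

/-- Let `lt` be (the strict form of) any total order on `H` which: agrees with
the constructed orders on `H_b` and on `H_c`; is arbitrary within each `H_a^n`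
but puts elements of `H_a^p` before elements of `H_a^q` whenever `p > q`; and
puts every element of `H_a` before every element of `H_b`, and every element of
`H_b` before every element of `H_c` (hence elements of `H_a` before elements of
`H_c`).  Then the Hall-set conditions hold for every composite element
`h = (h′,h″) ∈ H`: `h″ ∈ H` and `h < h″`; `h′ ∈ H` and `h′ < h″`; and either
`h′` is a letter (`a` or `b`) or `h′ = (x,y)` with `y ∈ H` and `y ≥ h″`. -/
theorem hall_set_conditions (lt : FM → FM → Prop)
    (htrans : ∀ x y z : FM, memH x → memH y → memH z → lt x y → lt y z → lt x z)
    (hasymm : ∀ x y : FM, memH x → memH y → lt x y → ¬ lt y x)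
    (htotal : ∀ x y : FM, memH x → memH y → lt x y ∨ x = y ∨ lt y x)
    (hb : ∀ v w : FM, memHB v → memHB w → (lt v w ↔ bLt v w))
    (hc : ∀ v w : FM, memHC v → memHC w → (lt v w ↔ cLt v w))
    (haLev : ∀ v w : FM, memHA v → memHA w → lev w < lev v → lt v w)
    (hAB : ∀ v w : FM, memHA v → memHB w → lt v w)
    (hBC : ∀ v w : FM, memHB v → memHC w → lt v w)
    (hAC : ∀ v w : FM, memHA v → memHC w → lt v w) :
    ∀ h' h'' : FM, memH (FM.node h' h'') →
      (memH h'' ∧ lt (FM.node h' h'') h'') ∧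
      (memH h' ∧ lt h' h'') ∧
      (h' = FM.leaf Letter.a ∨ h' = FM.leaf Letter.b ∨
        ∃ x y : FM, h' = FM.node x y ∧ memH y ∧ (lt h'' y ∨ y = h'')) := by

  intro h' h'' hmem
  rcases hmem with hA | hB | hC
  · -- case `h ∈ H_a`
    obtain ⟨l, hlB, hchain, heq⟩ := hA
    rcases l.eq_nil_or_concat' with rfl | ⟨L, x, rfl⟩
    · exact absurd heq (by simp)
    · rw [List.foldl_append, List.foldl_cons, List.foldl_nil] at heq
      injection heq with he1 he2
      subst he1; subst he2
      have hx : memHB h'' := hlB h'' (by simp)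
      have hL : ∀ v ∈ L, memHB v := fun v hv => hlB v (by simp [hv])
      have hchainL : List.Chain' (fun v w => bLe w v) L := hchain.prefix ⟨[h''], rfl⟩
      have hA' : memHA (L.foldl FM.node (FM.leaf Letter.a)) := ⟨L, hL, hchainL, rfl⟩
      have hAfull : memHA (FM.node (L.foldl FM.node (FM.leaf Letter.a)) h'') :=
        ⟨L ++ [h''], hlB, hchain, by rw [List.foldl_append, List.foldl_cons, List.foldl_nil]⟩
      refine ⟨⟨Or.inr (Or.inl hx), hAB _ _ hAfull hx⟩, ⟨Or.inl hA', hAB _ _ hA' hx⟩, ?_⟩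
      rcases L.eq_nil_or_concat' with rfl | ⟨M, y, rfl⟩
      · exact Or.inl rfl
      · refine Or.inr (Or.inr ⟨M.foldl FM.node (FM.leaf Letter.a), y,
          by rw [List.foldl_append, List.foldl_cons, List.foldl_nil],
          Or.inr (Or.inl (hL y (by simp))), ?_⟩)
        obtain ⟨-, -, hrel⟩ := List.isChain_append.1 hchain
        have hby : bLe h'' y := hrel y (by rw [List.getLast?_concat]; rfl) h'' rfl
        rcases hby with hlt | heq2
        · exact Or.inl ((hb h'' y hx (hL y (by simp))).2 hlt)
        · exact Or.inr heq2.symm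
  · -- case `h ∈ H_b`
    obtain ⟨n, hn⟩ := hB
    match n, hn with
    | 0, hn => simp [HBn] at hn
    | 1, hn => simp [HBn] at hn
    | (n+2), hn =>
      obtain ⟨v, hv, he⟩ := List.mem_map.1 hn
      injection he with he1 he2
      subst he1; subst he2
      exact ⟨⟨Or.inr (Or.inr ⟨n+1, hv⟩), hBC _ _ ⟨n+2, hn⟩ ⟨n+1, hv⟩⟩,
        ⟨Or.inl memHA_leaf_a, hAC _ _ memHA_leaf_a ⟨n+1, hv⟩⟩, Or.inl rfl⟩
  · -- case `h ∈ H_c`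
    obtain ⟨m, hm⟩ := hC
    have hmemC : memHC (FM.node h' h'') := ⟨m, hm⟩
    have hlevh : lev (FM.node h' h'') = m := lev_HC m _ hm
    have hm2 : 2 ≤ m := by
      rcases Nat.lt_or_ge m 2 with h2 | h2
      · interval_cases m
        · simp [HCn_zero] at hm
        · rw [HCn_one] at hm; simp at hm
      · exact h2
    rw [HCn_eq hm2] at hm
    have key : FM.node h' h'' ∈ prodsF HCn m →
        (memH h'' ∧ lt (FM.node h' h'') h'') ∧ (memH h' ∧ lt h' h'') ∧
        (h' = FM.leaf Letter.a ∨ h' = FM.leaf Letter.b ∨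
          ∃ x y : FM, h' = FM.node x y ∧ memH y ∧ (lt h'' y ∨ y = h'')) := by
      intro hp
      rcases mem_prodsF hp with ⟨w, hw, he⟩ | ⟨i, hi2, him, v, hv, w, hw, he⟩
      · injection he with he1 he2
        subst he1; subst he2
        have hwC : memHC h'' := ⟨m - 1, hw⟩
        exact ⟨⟨Or.inr (Or.inr hwC), (hc _ _ hmemC hwC).2
            (Or.inl (by rw [hlevh, lev_HC (m-1) _ hw]; omega))⟩,
          ⟨Or.inr (Or.inl memHB_leaf_b), hBC _ _ memHB_leaf_b hwC⟩, Or.inr (Or.inl rfl)⟩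
      · injection he with he1 he2
        subst he1; subst he2
        have hi11 : 1 ≤ i - 1 := by omega
        have hwC : memHC h'' := ⟨m - i, hw⟩
        have hvC : memHC v := ⟨i - 1, hv⟩
        have hB' : memHB (FM.node (FM.leaf Letter.a) v) := by
          have := memHB_node_a hi11 hv
          rw [Nat.sub_add_cancel (by omega : 1 ≤ i)] at this
          exact ⟨i, this⟩
        refine ⟨⟨Or.inr (Or.inr hwC), (hc _ _ hmemC hwC).2
            (Or.inl (by rw [hlevh, lev_HC (m - i) _ hw]; omega))⟩,
          ⟨Or.inr (Or.inl hB'), hBC _ _ hB' hwC⟩,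
          Or.inr (Or.inr ⟨FM.leaf Letter.a, v, rfl, Or.inr (Or.inr hvC),
            Or.inl ((hc _ _ hwC hvC).2
              (Or.inl (by rw [lev_HC _ _ hv, lev_HC _ _ hw]; omega)))⟩)⟩
    split at hm
    · exact key hm
    · rcases List.mem_append.1 hm with hek | hp
      · obtain ⟨r, s, hsr, hr, he⟩ := mem_ekL hek
        injection he with he1 he2
        subst he1; subst he2
        have hodd : m % 2 = 1 := by omega
        have hs : s < (HCn (m / 2)).length := by omega
        have hvm := getD_mem hr (FM.leaf Letter.a)
        have hwm := getD_mem hs (FM.leaf Letter.a)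
        have hk1 : 1 ≤ m / 2 := by omega
        have hvC : memHC ((HCn (m / 2)).getD r (FM.leaf Letter.a)) := ⟨m / 2, hvm⟩
        have hwC : memHC ((HCn (m / 2)).getD s (FM.leaf Letter.a)) := ⟨m / 2, hwm⟩
        have hB' : memHB (FM.node (FM.leaf Letter.a) ((HCn (m / 2)).getD r (FM.leaf Letter.a))) :=
          ⟨m / 2 + 1, memHB_node_a hk1 hvm⟩
        refine ⟨⟨Or.inr (Or.inr hwC), (hc _ _ hmemC hwC).2
            (Or.inl (by rw [hlevh, lev_HC (m / 2) _ hwm]; omega))⟩,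
          ⟨Or.inr (Or.inl hB'), hBC _ _ hB' hwC⟩,
          Or.inr (Or.inr ⟨FM.leaf Letter.a, _, rfl, Or.inr (Or.inr hvC), ?_⟩)⟩
        by_cases hrs : (HCn (m / 2)).getD s (FM.leaf Letter.a) =
            (HCn (m / 2)).getD r (FM.leaf Letter.a)
        · exact Or.inr hrs.symm
        · have hsne : s ≠ r := fun h => hrs (by rw [h])
          refine Or.inl ((hc _ _ hwC hvC).2 (Or.inr ⟨?_, ?_⟩))
          · rw [lev_HC _ _ hwm, lev_HC _ _ hvm]
          · rw [cIdx_getD hs, cIdx_getD hr]; omega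
      · exact key hp
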